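/- For a symmetric positive definite matrix $P$ and any invertible matrix $A$, the AIRM squared distance $d^2(P,Q) = \|\log(P^{-1/2}QP^{-1/2})\|_F^2$ is invariant under congruence: $d(APA^T, AQA^T) = d(P,Q)$ for all symmetric positive definite $P, Q$. -/

import Mathlib

open Matrix
open scoped Classical

variable {n : ℕ}

/-- Matrix logarithm via spectral calculus (hermitian input; junk value `0` otherwise). -/
noncomputable def matLog (A : Matrix (Fin n) (Fin n) ℝ) : Matrix (Fin n) (Fin n) ℝ :=
  if h : A.IsHermitian then
    h.eigenvectorUnitary.1 * Matrix.diagonal (Real.log ∘ h.eigenvalues) *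
      (star h.eigenvectorUnitary : Matrix (Fin n) (Fin n) ℝ)
  else 0

/-- Positive semidefinite square root (junk value `0` otherwise). -/
noncomputable def matSqrt (A : Matrix (Fin n) (Fin n) ℝ) : Matrix (Fin n) (Fin n) ℝ :=
  if h : A.PosSemidef then
    h.1.eigenvectorUnitary.1 * Matrix.diagonal (Real.sqrt ∘ h.1.eigenvalues) *
      (star h.1.eigenvectorUnitary : Matrix (Fin n) (Fin n) ℝ)
  else 0

/-- Real matrix power `M^s = exp (s • log M)` via spectral calculus. -/
noncomputable def matPow (A : Matrix (Fin n) (Fin n) ℝ) (s : ℝ) : Matrix (Fin n) (Fin n) ℝ :=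
  NormedSpace.exp (s • matLog A)

/-- AIRM geodesic `γ(s) = C^{1/2} (C^{-1/2} A C^{-1/2})^s C^{1/2}`. -/
noncomputable def airmGeodesic (C A : Matrix (Fin n) (Fin n) ℝ) (s : ℝ) :
    Matrix (Fin n) (Fin n) ℝ :=
  matSqrt C * matPow ((matSqrt C)⁻¹ * A * (matSqrt C)⁻¹) s * matSqrt C

/-- Riemannian logarithm `log_P(Q) = P^{1/2} log(P^{-1/2} Q P^{-1/2}) P^{1/2}`. -/
noncomputable def riemLog (P Q : Matrix (Fin n) (Fin n) ℝ) : Matrix (Fin n) (Fin n) ℝ :=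
  matSqrt P * matLog ((matSqrt P)⁻¹ * Q * (matSqrt P)⁻¹) * matSqrt P

/-- Frobenius norm of a real matrix. -/
noncomputable def frobNorm {p : ℕ} (X : Matrix (Fin p) (Fin p) ℝ) : ℝ :=
  Real.sqrt ((Xᵀ * X).trace)

/-- AIRM geodesic distance `d(P,Q) = ‖log(P^{-1/2} Q P^{-1/2})‖_F`. -/
noncomputable def airmDist {p : ℕ} (P Q : Matrix (Fin p) (Fin p) ℝ) : ℝ :=
  frobNorm (matLog ((matSqrt P)⁻¹ * Q * (matSqrt P)⁻¹))

namespace AirmAux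

variable {p : ℕ}

/-- Congruence by a matrix with invertible transpose-action preserves positive definiteness. -/
lemma posDef_conj {A M : Matrix (Fin p) (Fin p) ℝ} (hA : IsUnit A.det) (hM : M.PosDef) :
    (A * M * Aᵀ).PosDef := by
  have := hM.mul_mul_conjTranspose_same (B := A)
    (Matrix.vecMul_injective_iff_isUnit.2 ((Matrix.isUnit_iff_isUnit_det _).2 hA))
  simpa [Matrix.conjTranspose_eq_transpose_of_trivial] using this


/-- A positive semidefinite matrix with invertible determinant is positive definite. -/
lemma posDef_of_posSemidef_isUnit {S : Matrix (Fin p) (Fin p) ℝ} (hS : S.PosSemidef)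
    (h : IsUnit S.det) : S.PosDef := by
  exact hS.posDef_iff_isUnit.mpr ((Matrix.isUnit_iff_isUnit_det _).2 h)

lemma matSqrt_eq_cfc {P : Matrix (Fin p) (Fin p) ℝ} (hP : P.PosSemidef) :
    matSqrt P = cfc Real.sqrt P := by
  rw [hP.1.cfc_eq, matSqrt, dif_pos hP, Matrix.IsHermitian.cfc]
  congr 1

lemma matSqrt_mul_self {P : Matrix (Fin p) (Fin p) ℝ} (hP : P.PosSemidef) :
    matSqrt P * matSqrt P = P := by
  rw [matSqrt_eq_cfc hP, ← cfc_mul (a := P) Real.sqrt Real.sqrt]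
  have hspec := (posSemidef_iff_isHermitian_and_spectrum_nonneg.mp hP).2
  rw [cfc_congr (f := fun x => Real.sqrt x * Real.sqrt x) (g := id) (fun x hx => Real.mul_self_sqrt (hspec hx)),
    cfc_id ℝ P (show IsSelfAdjoint P from hP.1)]

lemma matSqrt_posSemidef {P : Matrix (Fin p) (Fin p) ℝ} (hP : P.PosSemidef) :
    (matSqrt P).PosSemidef := by
  rw [matSqrt_eq_cfc hP, posSemidef_iff_isHermitian_and_spectrum_nonneg]
  refine ⟨?_, ?_⟩
  · exact cfc_predicate Real.sqrt P
  · rw [cfc_map_spectrum (f := Real.sqrt) (a := P) (show IsSelfAdjoint P from hP.1)]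
    rintro _ ⟨x, -, rfl⟩
    exact Real.sqrt_nonneg x

/-- The square root of a positive definite matrix is positive definite. -/
lemma posDef_sqrt {P : Matrix (Fin p) (Fin p) ℝ} (hP : P.PosDef) :
    (matSqrt P).PosDef := by
  refine posDef_of_posSemidef_isUnit (matSqrt_posSemidef hP.posSemidef) ?_
  have h1 : matSqrt P * matSqrt P = P := matSqrt_mul_self hP.posSemidef
  have h2 : (matSqrt P).det * (matSqrt P).det = P.det := by
    rw [← Matrix.det_mul, h1]
  have hd := hP.det_pos
  refine isUnit_iff_ne_zero.mpr fun h0 => ?_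
  rw [h0, mul_zero] at h2
  exact absurd h2.symm (ne_of_gt hd)

lemma matSqrt_of_posDef {P : Matrix (Fin p) (Fin p) ℝ} (hP : P.PosDef) :
    matSqrt P = matSqrt P := rfl

/-- `matLog` agrees with the abstract continuous functional calculus. -/
lemma matLog_eq_cfc {N : Matrix (Fin p) (Fin p) ℝ} (hN : N.IsHermitian) :
    matLog N = cfc Real.log N := by
  rw [hN.cfc_eq, matLog, dif_pos hN, Matrix.IsHermitian.cfc]
  congr 1

/-- Conjugation by an orthogonal matrix as a star algebra homomorphism. -/
noncomputable def conjSAH (T : Matrix (Fin p) (Fin p) ℝ) (hT : T * Tᵀ = 1) (hT' : Tᵀ * T = 1) :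
    Matrix (Fin p) (Fin p) ℝ →⋆ₐ[ℝ] Matrix (Fin p) (Fin p) ℝ where
  toFun X := T * X * Tᵀ
  map_one' := by simpa using hT
  map_mul' X Y := by
    have : ∀ Z : Matrix (Fin p) (Fin p) ℝ, Tᵀ * (T * Z) = Z := fun Z => by
      rw [← Matrix.mul_assoc, hT', Matrix.one_mul]
    simp only [Matrix.mul_assoc, this]
  map_zero' := by simp
  map_add' X Y := by noncomm_ring
  commutes' r := by
    simp only [Algebra.algebraMap_eq_smul_one]
    rw [Matrix.mul_smul, Matrix.mul_one, Matrix.smul_mul, hT]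
  map_star' X := by
    simp only [star_eq_conjTranspose, Matrix.conjTranspose_eq_transpose_of_trivial,
      Matrix.transpose_mul, Matrix.transpose_transpose, Matrix.mul_assoc]

/-- `matLog` is equivariant under orthogonal conjugation. -/
lemma matLog_conj {T N : Matrix (Fin p) (Fin p) ℝ} (hT : T * Tᵀ = 1) (hT' : Tᵀ * T = 1)
    (hN : N.IsHermitian) : matLog (T * N * Tᵀ) = T * matLog N * Tᵀ := by
  have hN' : (T * N * Tᵀ).IsHermitian := by
    show (T * N * Tᵀ)ᴴ = _
    rw [Matrix.conjTranspose_eq_transpose_of_trivial]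
    have hNt : Nᵀ = N := by
      simpa [Matrix.conjTranspose_eq_transpose_of_trivial, Matrix.IsSymm] using hN
    simp [Matrix.transpose_mul, hNt, Matrix.mul_assoc]
  rw [matLog_eq_cfc hN, matLog_eq_cfc hN']
  have ha : IsSelfAdjoint N := hN
  have hφa : IsSelfAdjoint (conjSAH T hT hT' N) := hN'
  have hcont : ContinuousOn Real.log (spectrum ℝ N) := by
    rw [continuousOn_iff_continuous_restrict]; fun_prop
  have hφcont : Continuous (conjSAH T hT hT') := by
    show Continuous fun X => T * X * Tᵀ
    fun_prop
  have := StarAlgHom.map_cfc (conjSAH T hT hT') Real.log N hcont hφcont ha hφa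
  exact this.symm

/-- Frobenius norm is invariant under orthogonal conjugation. -/
lemma frobNorm_conj {T X : Matrix (Fin p) (Fin p) ℝ} (hT' : Tᵀ * T = 1) :
    frobNorm (T * X * Tᵀ) = frobNorm X := by
  unfold frobNorm
  congr 1
  have h1 : (T * X * Tᵀ)ᵀ * (T * X * Tᵀ) = T * (Xᵀ * X) * Tᵀ := by
    have : ∀ Z : Matrix (Fin p) (Fin p) ℝ, Tᵀ * (T * Z) = Z := fun Z => by
      rw [← Matrix.mul_assoc, hT', Matrix.one_mul]
    simp only [Matrix.transpose_mul, Matrix.transpose_transpose, Matrix.mul_assoc, this]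
  rw [h1, Matrix.trace_mul_cycle, ← Matrix.mul_assoc, hT', Matrix.one_mul]

end AirmAux

/-- The AIRM distance is invariant under congruence by any invertible matrix. -/
theorem airmDist_congruence_invariant {p : ℕ} (A : Matrix (Fin p) (Fin p) ℝ)
    (hA : IsUnit A.det) (P Q : Matrix (Fin p) (Fin p) ℝ)
    (hP : P.PosDef) (hQ : Q.PosDef) :
    airmDist (A * P * Aᵀ) (A * Q * Aᵀ) = airmDist P Q := by
  have hAPA : (A * P * Aᵀ).PosDef := AirmAux.posDef_conj hA hP
  set S : Matrix (Fin p) (Fin p) ℝ := matSqrt P with hSdef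
  set R : Matrix (Fin p) (Fin p) ℝ := matSqrt (A * P * Aᵀ) with hRdef
  have hmsP : matSqrt P = S := AirmAux.matSqrt_of_posDef hP
  have hmsAPA : matSqrt (A * P * Aᵀ) = R := AirmAux.matSqrt_of_posDef hAPA
  have hSpd : S.PosDef := AirmAux.posDef_sqrt hP
  have hRpd : R.PosDef := AirmAux.posDef_sqrt hAPA
  have hSt : Sᵀ = S := by
    simpa [Matrix.conjTranspose_eq_transpose_of_trivial, Matrix.IsSymm] using hSpd.1
  have hRt : Rᵀ = R := by
    simpa [Matrix.conjTranspose_eq_transpose_of_trivial, Matrix.IsSymm] using hRpd.1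
  have hSdet : IsUnit S.det := isUnit_iff_ne_zero.mpr (ne_of_gt hSpd.det_pos)
  have hRdet : IsUnit R.det := isUnit_iff_ne_zero.mpr (ne_of_gt hRpd.det_pos)
  have hSinvT : (S⁻¹)ᵀ = S⁻¹ := by rw [Matrix.transpose_nonsing_inv, hSt]
  have hRinvT : (R⁻¹)ᵀ = R⁻¹ := by rw [Matrix.transpose_nonsing_inv, hRt]
  have hSS : ∀ X : Matrix (Fin p) (Fin p) ℝ, S * (S * X) = P * X := fun X => by
    rw [← Matrix.mul_assoc, ← hmsP, AirmAux.matSqrt_mul_self hP.posSemidef]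
  have hRR : ∀ X : Matrix (Fin p) (Fin p) ℝ, R * (R * X) = A * (P * (Aᵀ * X)) := fun X => by
    rw [← Matrix.mul_assoc, ← hmsAPA, AirmAux.matSqrt_mul_self hAPA.posSemidef]
    simp only [Matrix.mul_assoc]
  have hScan : ∀ X : Matrix (Fin p) (Fin p) ℝ, S * (S⁻¹ * X) = X := fun X => by
    rw [← Matrix.mul_assoc, Matrix.mul_nonsing_inv _ hSdet, Matrix.one_mul]
  have hScan' : ∀ X : Matrix (Fin p) (Fin p) ℝ, S⁻¹ * (S * X) = X := fun X => by
    rw [← Matrix.mul_assoc, Matrix.nonsing_inv_mul _ hSdet, Matrix.one_mul]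
  set T : Matrix (Fin p) (Fin p) ℝ := R⁻¹ * A * S with hTdef
  have hTt : Tᵀ = S * (Aᵀ * R⁻¹) := by
    rw [hTdef, Matrix.transpose_mul, Matrix.transpose_mul, hSt, hRinvT]
  have hTT : T * Tᵀ = 1 := by
    calc T * Tᵀ = R⁻¹ * (A * (S * (S * (Aᵀ * R⁻¹)))) := by
          rw [hTt, hTdef]; simp only [Matrix.mul_assoc]
    _ = R⁻¹ * (A * (P * (Aᵀ * R⁻¹))) := by rw [hSS]
    _ = R⁻¹ * (R * (R * R⁻¹)) := by rw [hRR]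
    _ = 1 := by rw [Matrix.mul_nonsing_inv _ hRdet, Matrix.mul_one,
          Matrix.nonsing_inv_mul _ hRdet]
  have hT'T : Tᵀ * T = 1 := mul_eq_one_comm.mp hTT
  set N : Matrix (Fin p) (Fin p) ℝ := S⁻¹ * Q * S⁻¹ with hNdef
  have hNpd : N.PosDef := by
    have hSidet : IsUnit (S⁻¹).det := by
      rw [Matrix.det_nonsing_inv]
      exact isUnit_iff_ne_zero.mpr (by
        simpa using inv_ne_zero (ne_of_gt hSpd.det_pos))
    have := AirmAux.posDef_conj hSidet hQ
    rwa [hSinvT] at this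
  have hM : (matSqrt (A * P * Aᵀ))⁻¹ * (A * Q * Aᵀ) * (matSqrt (A * P * Aᵀ))⁻¹
      = T * N * Tᵀ := by
    rw [hmsAPA, hTt, hTdef, hNdef]
    simp only [Matrix.mul_assoc, hScan, hScan']
  rw [airmDist, airmDist, hM, AirmAux.matLog_conj hTT hT'T hNpd.1,
    AirmAux.frobNorm_conj hT'T, hmsP]
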